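/- Let G be a finite connected simple graph and let T be an uncle tree of G rooted at r. Let p_1, …, p_k be the leaves of T listed in the natural left-to-right order of the leaves of the plane tree T (the order in which they are visited by a depth-first traversal that visits the children of each vertex in their given linear order). For each i, let T_{p_i} denote the set of vertices on the path of T from r to p_i, and let X_i be the set of vertices of G that either belong to T_{p_i} or have an elder sibling belonging to T_{p_i}. Then (X_1, …, X_k) is a path-decomposition of G. -/
import Mathlib


variable {V : Type}

/-- `u` is an ancestor of `v` (possibly `u = v`) in the rooted tree given by
the parent function `parent`. -/
def Anc (parent : V → V) (u v : V) : Prop := ∃ k : ℕ, parent^[k] v = u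

/-- `u` is an elder sibling of `v`: both are non-root vertices with the same
parent, and `u` precedes `v` in the linear order (given by `rank`) on the
children of their common parent. -/
def Elder (parent : V → V) (rank : V → ℕ) (r u v : V) : Prop :=
  u ≠ r ∧ v ≠ r ∧ u ≠ v ∧ parent u = parent v ∧ rank u < rank v

/-- An uncle tree of `G` rooted at `r`: a spanning tree of `G` (encoded by a
parent function `parent` fixing the root `r`, with each tree edge `{v, parent v}`
an edge of `G`, and a `depth` function witnessing well-foundedness), together
with a linear order on the children of each vertex (encoded by `rank`, which is
injective on each set of siblings), such that for every edge `uv` of `G` that is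
not an edge of the tree, one of `u, v` has an elder sibling that is an ancestor
of the other. -/
structure UncleTree (G : SimpleGraph V) (r : V) where
  parent : V → V
  rank : V → ℕ
  depth : V → ℕ
  parent_root : parent r = r
  adj_parent : ∀ v, v ≠ r → G.Adj v (parent v)
  depth_root : depth r = 0
  depth_parent : ∀ v, v ≠ r → depth v = depth (parent v) + 1
  rank_injOn : ∀ u v, u ≠ r → v ≠ r → parent u = parent v → rank u = rank v → u = v
  uncle : ∀ u v, G.Adj u v → parent u = v ∨ parent v = u ∨
      (∃ w, Elder parent rank r w u ∧ Anc parent w v) ∨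
      (∃ w, Elder parent rank r w v ∧ Anc parent w u)


/-- `v` is a leaf of the rooted tree given by `parent`: it has no children. -/
def IsLeaf (parent : V → V) (v : V) : Prop := ∀ u, parent u = v → u = v

/-- Leaf `p` comes before leaf `q` in the natural left-to-right (depth-first)
order of the leaves of the plane tree: some ancestor of `p` is an elder sibling
of some ancestor of `q`. -/
def Before (parent : V → V) (rank : V → ℕ) (r p q : V) : Prop :=
  ∃ a b, Elder parent rank r a b ∧ Anc parent a p ∧ Anc parent b q

namespace UT

variable {parent : V → V} {rank depth : V → ℕ} {r : V}

lemma anc_refl (v : V) : Anc parent v v := ⟨0, rfl⟩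

lemma anc_parent (v : V) : Anc parent (parent v) v := ⟨1, rfl⟩

lemma anc_trans {a b c : V} (h1 : Anc parent a b) (h2 : Anc parent b c) :
    Anc parent a c := by
  obtain ⟨k1, rfl⟩ := h1; obtain ⟨k2, rfl⟩ := h2
  exact ⟨k1 + k2, by rw [Function.iterate_add_apply]⟩

lemma anc_total {a b x : V} (h1 : Anc parent a x) (h2 : Anc parent b x) :
    Anc parent a b ∨ Anc parent b a := by
  obtain ⟨k1, rfl⟩ := h1; obtain ⟨k2, rfl⟩ := h2
  rcases le_total k1 k2 with h | h
  · exact Or.inr ⟨k2 - k1, by rw [← Function.iterate_add_apply, Nat.sub_add_cancel h]⟩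
  · exact Or.inl ⟨k1 - k2, by rw [← Function.iterate_add_apply, Nat.sub_add_cancel h]⟩

lemma iterate_root (hroot : parent r = r) : ∀ k, parent^[k] r = r
  | 0 => rfl
  | (k+1) => by rw [Function.iterate_succ_apply, hroot, iterate_root hroot k]

lemma anc_depth_lt (hroot : parent r = r)
    (hdp : ∀ v, v ≠ r → depth v = depth (parent v) + 1)
    {a b : V} (h : Anc parent a b) (hne : a ≠ b) : depth a < depth b := by
  obtain ⟨k, hk⟩ := h
  induction k generalizing b with
  | zero => exact absurd hk.symm hne
  | succ n ih =>
    by_cases hb : b = r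
    · subst hb; rw [iterate_root hroot] at hk; exact absurd hk.symm hne
    · rw [Function.iterate_succ_apply] at hk
      by_cases hpb : a = parent b
      · rw [hdp b hb, ← hpb]; omega
      · have := ih hpb hk
        rw [hdp b hb]; omega

lemma sibling_unique (hroot : parent r = r)
    (hdp : ∀ v, v ≠ r → depth v = depth (parent v) + 1)
    {a c x : V} (hpa : parent a = parent c)
    (har : a ≠ r) (hcr : c ≠ r) (hax : Anc parent a x) (hcx : Anc parent c x) :
    a = c := by
  by_contra hne
  have hd : depth a = depth c := by rw [hdp a har, hdp c hcr, hpa]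
  rcases anc_total hax hcx with h | h
  · have := anc_depth_lt hroot hdp h hne; omega
  · have := anc_depth_lt hroot hdp h (Ne.symm hne); omega

lemma child_on_path (hroot : parent r = r) {g : V} :
    ∀ k (x : V), parent^[k] x = g → g ≠ x →
      ∃ c, parent c = g ∧ c ≠ r ∧ Anc parent c x := by
  intro k
  induction k with
  | zero => intro x h hne; exact absurd h.symm hne
  | succ n ih =>
    intro x h hne
    rw [Function.iterate_succ_apply] at h
    by_cases hpx : parent x = g
    · refine ⟨x, hpx, ?_, anc_refl x⟩
      rintro rfl
      exact hne (hroot.symm.trans hpx).symm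
    · obtain ⟨c, h1, h2, h3⟩ := ih (parent x) h (fun he => hpx he.symm)
      exact ⟨c, h1, h2, anc_trans h3 (anc_parent x)⟩

lemma child_on_path' (hroot : parent r = r) {g x : V}
    (h : Anc parent g x) (hne : g ≠ x) :
    ∃ c, parent c = g ∧ c ≠ r ∧ Anc parent c x := by
  obtain ⟨k, hk⟩ := h
  exact child_on_path hroot k x hk hne

lemma exists_leaf_desc [Fintype V] (hroot : parent r = r)
    (hdp : ∀ v, v ≠ r → depth v = depth (parent v) + 1) (v : V) :
    ∃ q, IsLeaf parent q ∧ Anc parent v q := by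
  set N := Finset.univ.sup depth with hN
  have key : ∀ n (v : V), N - depth v ≤ n → ∃ q, IsLeaf parent q ∧ Anc parent v q := by
    intro n
    induction n with
    | zero =>
      intro v hv
      by_cases hl : IsLeaf parent v
      · exact ⟨v, hl, anc_refl v⟩
      · exfalso
        simp only [IsLeaf, not_forall] at hl
        obtain ⟨u, hu, hne⟩ := hl
        have hur : u ≠ r := by rintro rfl; rw [hroot] at hu; exact hne hu
        have hd : depth u = depth v + 1 := by rw [hdp u hur, hu]
        have hle : depth u ≤ N := Finset.le_sup (Finset.mem_univ u)
        omega
    | succ n ihn =>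
      intro v hv
      by_cases hl : IsLeaf parent v
      · exact ⟨v, hl, anc_refl v⟩
      · simp only [IsLeaf, not_forall] at hl
        obtain ⟨u, hu, hne⟩ := hl
        have hur : u ≠ r := by rintro rfl; rw [hroot] at hu; exact hne hu
        have hd : depth u = depth v + 1 := by rw [hdp u hur, hu]
        have hle : depth u ≤ N := Finset.le_sup (Finset.mem_univ u)
        obtain ⟨q, hq1, hq2⟩ := ihn u (by omega)
        exact ⟨q, hq1, anc_trans (hu ▸ anc_parent u) hq2⟩
  exact key (N - depth v) v le_rfl

lemma before_asymm (hroot : parent r = r)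
    (hdp : ∀ v, v ≠ r → depth v = depth (parent v) + 1)
    {x y : V} (h1 : Before parent rank r x y) (h2 : Before parent rank r y x) :
    False := by
  obtain ⟨a, b, ⟨har, hbr, hab, hpab, hrab⟩, hax, hby⟩ := h1
  obtain ⟨a', b', ⟨har', hbr', hab', hpab', hrab'⟩, ha'y, hb'x⟩ := h2
  have hgx : Anc parent (parent a) x := anc_trans (anc_parent a) hax
  have hgy : Anc parent (parent a) y := by
    rw [hpab]; exact anc_trans (anc_parent b) hby
  have hg'y : Anc parent (parent a') y := anc_trans (anc_parent a') ha'y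
  have hg'x : Anc parent (parent a') x := by
    rw [hpab']; exact anc_trans (anc_parent b') hb'x
  by_cases hgg : parent a = parent a'
  · have e1 : b = a' := sibling_unique hroot hdp (by rw [← hpab, hgg]) hbr har' hby ha'y
    have e2 : a = b' := sibling_unique hroot hdp (by rw [hgg, hpab']) har hbr' hax hb'x
    rw [e1] at hrab; rw [← e2] at hrab'; omega
  · rcases anc_total hgx hg'x with h | h
    · obtain ⟨c, hc1, hc2, hc3⟩ := child_on_path' hroot h hgg
      have hcx : Anc parent c x := anc_trans hc3 hg'x
      have hcy : Anc parent c y := anc_trans hc3 hg'y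
      have e1 : a = c := sibling_unique hroot hdp hc1.symm har hc2 hax hcx
      have e2 : b = c := sibling_unique hroot hdp (by rw [← hpab, hc1]) hbr hc2 hby hcy
      exact hab (e1.trans e2.symm)
    · obtain ⟨c, hc1, hc2, hc3⟩ := child_on_path' hroot h (fun he => hgg he.symm)
      have hcx : Anc parent c x := anc_trans hc3 hgx
      have hcy : Anc parent c y := anc_trans hc3 hgy
      have e1 : a' = c := sibling_unique hroot hdp hc1.symm har' hc2 ha'y hcy
      have e2 : b' = c := sibling_unique hroot hdp (by rw [← hpab', hc1]) hbr' hc2 hb'x hcx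
      exact hab' (e1.trans e2.symm)

end UT

/-- Let `G` be a finite connected simple graph and `T` an uncle
tree of `G` rooted at `r`. List the leaves of `T` as `p 1, …, p k` in the
natural left-to-right order of the leaves of the plane tree `T`. For each `i`
let `X i` be the set of vertices that either lie on the path of `T` from `r` to
`p i`, or have an elder sibling lying on this path. Then `(X 1, …, X k)` is a
path-decomposition of `G`. -/


theorem uncleTree_pathDecomposition [Fintype V] (G : SimpleGraph V) (hG : G.Connected)
    (r : V) (T : UncleTree G r) (k : ℕ) (p : Fin k → V)
    (hinj : Function.Injective p)
    (hleaves : ∀ v : V, IsLeaf T.parent v ↔ ∃ i, p i = v)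
    (hord : ∀ i j : Fin k, i < j → Before T.parent T.rank r (p i) (p j))
    (X : Fin k → Set V)
    (hX : ∀ i, X i = {v : V | Anc T.parent v (p i) ∨
      ∃ w, Elder T.parent T.rank r w v ∧ Anc T.parent w (p i)}) :
    (∀ v : V, ∃ i, v ∈ X i) ∧
    (∀ u v : V, G.Adj u v → ∃ i, u ∈ X i ∧ v ∈ X i) ∧
    (∀ l i j : Fin k, l ≤ i → i ≤ j → X l ∩ X j ⊆ X i) := by
  have hroot := T.parent_root
  have hdp := T.depth_parent
  have anc_root : ∀ v, Anc T.parent r v := by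
    have key : ∀ n (v : V), T.depth v ≤ n → Anc T.parent r v := by
      intro n
      induction n with
      | zero =>
        intro v hv
        by_cases hvr : v = r
        · subst hvr; exact UT.anc_refl v
        · have := hdp v hvr; omega
      | succ n ih =>
        intro v hv
        by_cases hvr : v = r
        · subst hvr; exact UT.anc_refl v
        · have hd := hdp v hvr
          exact UT.anc_trans (ih (T.parent v) (by omega)) (UT.anc_parent v)
    exact fun v => key (T.depth v) v le_rfl
  have ne_parent : ∀ v : V, v ≠ r → v ≠ T.parent v := by
    intro v hvr heq
    have := hdp v hvr
    rw [← heq] at this; omega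
  have hchar : ∀ (v : V) (m : Fin k), v ≠ r →
      (v ∈ X m ↔ ∃ c, T.parent c = T.parent v ∧ c ≠ r ∧ T.rank c ≤ T.rank v ∧
        Anc T.parent c (p m)) := by
    intro v m hvr
    rw [hX m]
    constructor
    · rintro (h | ⟨w, ⟨hwr, -, hwv, hpw, hrw⟩, hw⟩)
      · exact ⟨v, rfl, hvr, le_rfl, h⟩
      · exact ⟨w, hpw, hwr, le_of_lt hrw, hw⟩
    · rintro ⟨c, hpc, hcr, hrc, hcm⟩
      by_cases hcv : c = v
      · exact Or.inl (hcv ▸ hcm)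
      · exact Or.inr ⟨c, ⟨hcr, hvr, hcv, hpc,
          lt_of_le_of_ne hrc (fun h => hcv (T.rank_injOn c v hcr hvr hpc h))⟩, hcm⟩
  refine ⟨?_, ?_, ?_⟩
  · intro v
    obtain ⟨q, hql, hanc⟩ := UT.exists_leaf_desc hroot hdp v
    obtain ⟨i, rfl⟩ := (hleaves q).mp hql
    exact ⟨i, by rw [hX i]; exact Or.inl hanc⟩
  · intro u v huv
    rcases T.uncle u v huv with h | h | ⟨w, hw, hwv⟩ | ⟨w, hw, hwu⟩
    · obtain ⟨q, hql, hanc⟩ := UT.exists_leaf_desc hroot hdp u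
      obtain ⟨i, rfl⟩ := (hleaves q).mp hql
      have h2 : Anc T.parent v (p i) :=
        UT.anc_trans (by rw [← h]; exact UT.anc_parent u) hanc
      exact ⟨i, by rw [hX i]; exact Or.inl hanc, by rw [hX i]; exact Or.inl h2⟩
    · obtain ⟨q, hql, hanc⟩ := UT.exists_leaf_desc hroot hdp v
      obtain ⟨i, rfl⟩ := (hleaves q).mp hql
      have h2 : Anc T.parent u (p i) :=
        UT.anc_trans (by rw [← h]; exact UT.anc_parent v) hanc
      exact ⟨i, by rw [hX i]; exact Or.inl h2, by rw [hX i]; exact Or.inl hanc⟩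
    · obtain ⟨q, hql, hanc⟩ := UT.exists_leaf_desc hroot hdp v
      obtain ⟨i, rfl⟩ := (hleaves q).mp hql
      exact ⟨i, by rw [hX i]; exact Or.inr ⟨w, hw, UT.anc_trans hwv hanc⟩,
        by rw [hX i]; exact Or.inl hanc⟩
    · obtain ⟨q, hql, hanc⟩ := UT.exists_leaf_desc hroot hdp u
      obtain ⟨i, rfl⟩ := (hleaves q).mp hql
      exact ⟨i, by rw [hX i]; exact Or.inl hanc,
        by rw [hX i]; exact Or.inr ⟨w, hw, UT.anc_trans hwu hanc⟩⟩
  · rintro l i j hli hij v ⟨hvl, hvj⟩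
    rcases eq_or_lt_of_le hli with rfl | hli
    · exact hvl
    rcases eq_or_lt_of_le hij with rfl | hij
    · exact hvj
    by_cases hvr : v = r
    · subst hvr; rw [hX i]; exact Or.inl (anc_root (p i))
    obtain ⟨cl, hclp, hclr, hclrk, hclanc⟩ := (hchar v l hvr).mp hvl
    obtain ⟨cj, hcjp, hcjr, hcjrk, hcjanc⟩ := (hchar v j hvr).mp hvj
    have hfl : Anc T.parent (T.parent v) (p l) := by
      rw [← hclp]; exact UT.anc_trans (UT.anc_parent cl) hclanc
    have hfj : Anc T.parent (T.parent v) (p j) := by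
      rw [← hcjp]; exact UT.anc_trans (UT.anc_parent cj) hcjanc
    have hfi : Anc T.parent (T.parent v) (p i) := by
      obtain ⟨a, b, ⟨har, hbr, hab, hpab, hrab⟩, hal, hbi⟩ := hord l i hli
      have hgl : Anc T.parent (T.parent a) (p l) := UT.anc_trans (UT.anc_parent a) hal
      have hgi : Anc T.parent (T.parent a) (p i) := by
        rw [hpab]; exact UT.anc_trans (UT.anc_parent b) hbi
      rcases UT.anc_total hfl hgl with hfg | hgf
      · exact UT.anc_trans hfg hgi
      by_cases hgfe : T.parent a = T.parent v
      · exact hgfe ▸ hgi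
      obtain ⟨c, hcp, hcr, hcanc⟩ := UT.child_on_path' hroot hgf hgfe
      have hcl2 : Anc T.parent c (p l) := UT.anc_trans hcanc hfl
      have hac : a = c := UT.sibling_unique hroot hdp hcp.symm har hcr hal hcl2
      have haf : Anc T.parent a (T.parent v) := hac ▸ hcanc
      obtain ⟨a', b', ⟨har', hbr', hab', hpab', hrab'⟩, ha'i, hb'j⟩ := hord i j hij
      have hg'j : Anc T.parent (T.parent a') (p j) := by
        rw [hpab']; exact UT.anc_trans (UT.anc_parent b') hb'j
      have hg'i : Anc T.parent (T.parent a') (p i) := UT.anc_trans (UT.anc_parent a') ha'i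
      rcases UT.anc_total hfj hg'j with hfg' | hg'f
      · exact UT.anc_trans hfg' hg'i
      by_cases hg'fe : T.parent a' = T.parent v
      · exact hg'fe ▸ hg'i
      obtain ⟨c', hc'p, hc'r, hc'anc⟩ := UT.child_on_path' hroot hg'f hg'fe
      have hc'j : Anc T.parent c' (p j) := UT.anc_trans hc'anc hfj
      have hb'c : b' = c' := UT.sibling_unique hroot hdp (by rw [hc'p, hpab']) hbr' hc'r hb'j hc'j
      have hb'f : Anc T.parent b' (T.parent v) := hb'c ▸ hc'anc
      have hgf2 : Anc T.parent (T.parent a) (T.parent v) :=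
        UT.anc_trans (UT.anc_parent a) haf
      have hg'f2 : Anc T.parent (T.parent a') (T.parent v) := by
        rw [hpab']; exact UT.anc_trans (UT.anc_parent b') hb'f
      exfalso
      by_cases hgg : T.parent a = T.parent a'
      · have e1 : b = a' := UT.sibling_unique hroot hdp (by rw [← hpab, hgg]) hbr har' hbi ha'i
        have e2 : a = b' := UT.sibling_unique hroot hdp (by rw [hgg, hpab']) har hbr' haf hb'f
        rw [e1] at hrab; rw [← e2] at hrab'; omega
      · rcases UT.anc_total hgf2 hg'f2 with h | h
        · obtain ⟨c₂, h2p, h2r, h2anc⟩ := UT.child_on_path' hroot h hgg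
          have h2f : Anc T.parent c₂ (T.parent v) := UT.anc_trans h2anc hg'f2
          have h2i : Anc T.parent c₂ (p i) := UT.anc_trans h2anc hg'i
          have e1 : a = c₂ := UT.sibling_unique hroot hdp h2p.symm har h2r haf h2f
          have e2 : b = c₂ := UT.sibling_unique hroot hdp (by rw [← hpab, h2p]) hbr h2r hbi h2i
          exact hab (e1.trans e2.symm)
        · obtain ⟨c₂, h2p, h2r, h2anc⟩ := UT.child_on_path' hroot h (fun he => hgg he.symm)
          have h2f : Anc T.parent c₂ (T.parent v) := UT.anc_trans h2anc hgf2
          have h2i : Anc T.parent c₂ (p i) := UT.anc_trans h2anc hgi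
          have e1 : a' = c₂ := UT.sibling_unique hroot hdp h2p.symm har' h2r ha'i h2i
          have e2 : b' = c₂ := UT.sibling_unique hroot hdp (by rw [← hpab', h2p]) hbr' h2r hb'f h2f
          exact hab' (e1.trans e2.symm)
    have hfne : T.parent v ≠ p i := by
      intro h
      have hleaf : IsLeaf T.parent (p i) := (hleaves (p i)).mpr ⟨i, rfl⟩
      have hvp : v = p i := hleaf v h
      exact (ne_parent v hvr) (by rw [h, ← hvp])
    obtain ⟨ci, hcip, hcir, hcianc⟩ := UT.child_on_path' hroot hfi hfne
    have hrk : T.rank ci ≤ T.rank v := by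
      by_contra hlt
      push_neg at hlt
      have hne : cj ≠ ci := fun h => by rw [h] at hcjrk; omega
      have hbef : Before T.parent T.rank r (p j) (p i) :=
        ⟨cj, ci, ⟨hcjr, hcir, hne, by rw [hcjp, hcip],
          Nat.lt_of_le_of_lt hcjrk hlt⟩, hcjanc, hcianc⟩
      exact UT.before_asymm hroot hdp hbef (hord i j hij)
    exact (hchar v i hvr).mpr ⟨ci, hcip, hcir, hrk, hcianc⟩
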